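/- arXiv:2112.12908 — 3 statements merged into one kernel-verified Lean document; each statement's English description precedes it below -/
import Mathlib

section
/- Let G be a real-valued Gaussian random variable with mean -σ²/2 and variance σ² for some σ > 0. Then E[min(1, e^G)] = 2Φ(-σ/2), where Φ is the standard normal cumulative distribution function. -/
open MeasureTheory ProbabilityTheory Real

/-- The cumulative distribution function of the standard normal distribution `N(0,1)`. -/
noncomputable def stdNormalCDF (x : ℝ) : ℝ :=
  ∫ t in Set.Iic x, (Real.sqrt (2 * Real.pi))⁻¹ * Real.exp (-t ^ 2 / 2)

lemma aux_integral_comp_add_right_Iic (g : ℝ → ℝ) (a d : ℝ) :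
    (∫ x in Set.Iic a, g (x + d)) = ∫ x in Set.Iic (a + d), g x := by
  have h1 : ∀ c : ℝ, MeasurableSet (Set.Iic c) := fun c => measurableSet_Iic
  rw [← integral_indicator (h1 a), ← integral_indicator (h1 (a + d)),
    ← integral_add_right_eq_self (fun x => Set.indicator (Set.Iic (a + d)) g x) d]
  congr 1
  ext x
  rw [← Set.indicator_comp_right (· + d)]
  have : (· + d) ⁻¹' Set.Iic (a + d) = Set.Iic a := by
    ext y; simp
  rw [this]
  rfl

lemma aux_integral_comp_mul_left_Iic (g : ℝ → ℝ) (a : ℝ) {b : ℝ} (hb : 0 < b) :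
    (∫ x in Set.Iic a, g (b * x)) = b⁻¹ • ∫ x in Set.Iic (b * a), g x := by
  have h1 : ∀ c : ℝ, MeasurableSet (Set.Iic c) := fun c => measurableSet_Iic
  rw [← integral_indicator (h1 a), ← integral_indicator (h1 (b * a)),
    ← abs_of_pos (inv_pos.mpr hb), ← Measure.integral_comp_mul_left]
  congr 1
  ext x
  rw [← Set.indicator_comp_right (b * ·), Set.preimage_const_mul_Iic₀ _ hb,
    mul_div_cancel_left₀ _ hb.ne']
  rfl

lemma aux_std_pdf (t : ℝ) :
    (Real.sqrt (2 * Real.pi))⁻¹ * Real.exp (-t ^ 2 / 2) = gaussianPDFReal 0 1 t := by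
  simp only [gaussianPDFReal, NNReal.coe_one, mul_one, sub_zero]

lemma aux_cdf (m : ℝ) {σ : ℝ} (hσ : 0 < σ) (c : ℝ) :
    ∫ x in Set.Iic c, gaussianPDFReal m (Real.toNNReal (σ ^ 2)) x
      = stdNormalCDF ((c - m) / σ) := by
  have hσ' : σ ≠ 0 := hσ.ne'
  have h1 : (∫ x in Set.Iic c, gaussianPDFReal m (Real.toNNReal (σ ^ 2)) x)
      = ∫ x in Set.Iic (c - m), gaussianPDFReal 0 (Real.toNNReal (σ ^ 2)) x := by
    have hshift := aux_integral_comp_add_right_Iic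
      (gaussianPDFReal m (Real.toNNReal (σ ^ 2))) (c - m) m
    rw [sub_add_cancel] at hshift
    rw [← hshift]
    refine setIntegral_congr_fun measurableSet_Iic (fun x _ => ?_)
    rw [gaussianPDFReal_add, sub_self]
  have hvar : (NNReal.mk (σ ^ 2)⁻¹ (inv_nonneg.mpr (sq_nonneg _)) * Real.toNNReal (σ ^ 2) : NNReal)
      = 1 := by
    ext
    rw [NNReal.coe_mul, NNReal.coe_one, NNReal.coe_mk, Real.coe_toNNReal _ (sq_nonneg σ)]
    field_simp
  have h2 : ∀ x : ℝ, gaussianPDFReal 0 (Real.toNNReal (σ ^ 2)) (σ * x)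
      = σ⁻¹ * gaussianPDFReal 0 1 x := by
    intro x
    rw [gaussianPDFReal_mul hσ' x, hvar, mul_zero, abs_of_pos (inv_pos.mpr hσ)]
  have hsc := aux_integral_comp_mul_left_Iic
    (gaussianPDFReal 0 (Real.toNNReal (σ ^ 2))) ((c - m) / σ) hσ
  rw [mul_div_cancel₀ _ hσ'] at hsc
  have hR : (∫ x in Set.Iic (c - m), gaussianPDFReal 0 (Real.toNNReal (σ ^ 2)) x)
      = σ • ∫ x in Set.Iic ((c - m) / σ),
          gaussianPDFReal 0 (Real.toNNReal (σ ^ 2)) (σ * x) := by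
    rw [hsc, smul_smul, mul_inv_cancel₀ hσ', one_smul]
  rw [h1, hR]
  simp_rw [h2]
  rw [integral_const_mul, smul_eq_mul, ← mul_assoc, mul_inv_cancel₀ hσ', one_mul]
  unfold stdNormalCDF
  exact setIntegral_congr_fun measurableSet_Iic (fun t _ => (aux_std_pdf t).symm)

lemma aux_cdf_total : stdNormalCDF x + ∫ t in Set.Ioi x, gaussianPDFReal 0 1 t = 1 := by
  have hint : Integrable (gaussianPDFReal 0 1) := integrable_gaussianPDFReal 0 1
  have h : stdNormalCDF x = ∫ t in Set.Iic x, gaussianPDFReal 0 1 t :=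
    setIntegral_congr_fun measurableSet_Iic (fun t _ => aux_std_pdf t)
  rw [h, intervalIntegral.integral_Iic_add_Ioi hint.integrableOn hint.integrableOn,
    integral_gaussianPDFReal_eq_one 0 one_ne_zero]

lemma aux_cdf_neg (x : ℝ) : stdNormalCDF (-x) = 1 - stdNormalCDF x := by
  have heven : ∀ t : ℝ, gaussianPDFReal 0 1 (-t) = gaussianPDFReal 0 1 t := by
    intro t
    simp only [gaussianPDFReal, sub_zero, neg_sq]
  have h : stdNormalCDF (-x) = ∫ t in Set.Ioi x, gaussianPDFReal 0 1 t := by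
    have hc := integral_comp_neg_Iic (-x) (gaussianPDFReal 0 1)
    rw [neg_neg] at hc
    rw [← hc]
    unfold stdNormalCDF
    refine setIntegral_congr_fun measurableSet_Iic (fun t _ => ?_)
    rw [heven, aux_std_pdf]
  rw [h, eq_sub_iff_add_eq, add_comm]
  exact aux_cdf_total

/-- If `G ~ N(-σ²/2, σ²)` with `σ > 0`, then `E[min(1, e^G)] = 2Φ(-σ/2)`. -/
theorem expectation_min_one_exp_gaussian (σ : ℝ) (hσ : 0 < σ) :
    ∫ g, min 1 (Real.exp g) ∂(gaussianReal (-σ ^ 2 / 2) (Real.toNNReal (σ ^ 2))) =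
      2 * stdNormalCDF (-σ / 2) := by
  have hσ' : σ ≠ 0 := hσ.ne'
  set v : NNReal := Real.toNNReal (σ ^ 2) with hv
  have hv0 : v ≠ 0 := by
    simp [hv, Real.toNNReal_eq_zero, not_le]
    positivity
  set m : ℝ := -σ ^ 2 / 2 with hm
  -- convert to a Lebesgue integral against the pdf
  have hpdfm : Measurable fun x => (gaussianPDFReal m v x).toNNReal :=
    (measurable_gaussianPDFReal m v).real_toNNReal
  have h0 : ∫ g, min 1 (Real.exp g) ∂(gaussianReal m v)
      = ∫ x, gaussianPDFReal m v x * min 1 (Real.exp x) := by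
    rw [gaussianReal_of_var_ne_zero m hv0]
    have : gaussianPDF m v = fun x => ((gaussianPDFReal m v x).toNNReal : ENNReal) := rfl
    rw [this, integral_withDensity_eq_integral_smul hpdfm]
    refine integral_congr_ae (Filter.Eventually.of_forall fun x => ?_)
    simp only [NNReal.smul_def, smul_eq_mul,
      Real.coe_toNNReal _ (gaussianPDFReal_nonneg m v x)]
  rw [h0]
  -- integrability of the integrand
  have hmin : ∀ x : ℝ, ‖min 1 (Real.exp x)‖ ≤ 1 := by
    intro x
    rw [Real.norm_eq_abs, abs_of_nonneg (le_min zero_le_one (Real.exp_nonneg x))]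
    exact min_le_left _ _
  have hIntegrable : Integrable (fun x => min 1 (Real.exp x) * gaussianPDFReal m v x) :=
    (integrable_gaussianPDFReal m v).bdd_mul
      ((continuous_const.min Real.continuous_exp).aestronglyMeasurable) (Filter.Eventually.of_forall hmin)
  have hIntegrable' : Integrable (fun x => gaussianPDFReal m v x * min 1 (Real.exp x)) := by
    simpa [mul_comm] using hIntegrable
  -- split at 0
  rw [← intervalIntegral.integral_Iic_add_Ioi (b := (0:ℝ)) hIntegrable'.integrableOn hIntegrable'.integrableOn]
  have hA : (∫ x in Set.Iic (0:ℝ), gaussianPDFReal m v x * min 1 (Real.exp x))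
      = stdNormalCDF (-σ / 2) := by
    have hcongr : ∀ x ∈ Set.Iic (0:ℝ), gaussianPDFReal m v x * min 1 (Real.exp x)
        = gaussianPDFReal (σ ^ 2 / 2) v x := by
      intro x hx
      rw [min_eq_right (Real.exp_le_one_iff.mpr hx)]
      simp only [gaussianPDFReal, hm]
      rw [mul_assoc, ← Real.exp_add]
      congr 1
      have hcv : ((v : ℝ)) = σ ^ 2 := Real.coe_toNNReal _ (sq_nonneg σ)
      rw [hcv]
      have hs : (σ:ℝ) ^ 2 ≠ 0 := pow_ne_zero 2 hσ'
      field_simp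
      ring
    rw [setIntegral_congr_fun measurableSet_Iic hcongr, hv, aux_cdf _ hσ]
    congr 1
    field_simp
    ring
  have hB : (∫ x in Set.Ioi (0:ℝ), gaussianPDFReal m v x * min 1 (Real.exp x))
      = stdNormalCDF (-σ / 2) := by
    have hcongr : ∀ x ∈ Set.Ioi (0:ℝ), gaussianPDFReal m v x * min 1 (Real.exp x)
        = gaussianPDFReal m v x := by
      intro x hx
      rw [min_eq_left (Real.one_le_exp (le_of_lt hx)), mul_one]
    rw [setIntegral_congr_fun measurableSet_Ioi hcongr]
    have hint : Integrable (gaussianPDFReal m v) := integrable_gaussianPDFReal m v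
    have hsplit := intervalIntegral.integral_Iic_add_Ioi (b := (0:ℝ)) hint.integrableOn hint.integrableOn
    rw [integral_gaussianPDFReal_eq_one m hv0] at hsplit
    have hIic : (∫ x in Set.Iic (0:ℝ), gaussianPDFReal m v x) = stdNormalCDF (σ / 2) := by
      rw [hv, aux_cdf _ hσ]
      congr 1
      rw [hm]
      field_simp
      ring
    have := aux_cdf_neg (σ / 2)
    rw [show (-σ/2 : ℝ) = -(σ/2) by ring, this]
    linarith
  rw [hA, hB]
  ring
end

section
/- Consider a mixture density γ(x) ∝ Σ_{j=1}^J w_j |Σ_j|^{-1/2} g(Σ_j^{-1/2}(x - μ_j)) on ℝ^d, where g is a fixed density with global maximum at 0, each Σ_j is symmetric positive definite, and w_j > 0. If each component is power-tempered, i.e. b_j(x,β) = [w_j |Σ_j|^{-1/2} g(Σ_j^{-1/2}(x-μ_j))]^β, and written in normalised form b_j(x,β) = W_{(j,β)} · [g(s_j(x))]^β / ∫ [g(s_j(x))]^β dx, then the resulting mixture weights satisfy W_{(j,β)} ∝ w_j^β |Σ_j|^{(1-β)/2}. -/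
open MeasureTheory Real

/-- Change of variables for an affine map `x ↦ A(x - μ)` under Lebesgue measure on `Fin d → ℝ`. -/
lemma integral_comp_mulVec_sub {d : ℕ} (f : (Fin d → ℝ) → ℝ) (hf : Measurable f)
    (A : Matrix (Fin d) (Fin d) ℝ) (hA : A.det ≠ 0) (μ : Fin d → ℝ) :
    ∫ x, f (A.mulVec (x - μ)) = |A.det|⁻¹ * ∫ u, f u := by
  rw [integral_sub_right_eq_self (fun v => f (A.mulVec v)) μ]
  have hmeas : Measurable (Matrix.toLin' A) :=
    (Matrix.toLin' A).continuous_of_finiteDimensional.measurable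
  have h1 : ∫ x, f (A.mulVec x) = ∫ y, f y ∂(Measure.map (Matrix.toLin' A) volume) := by
    rw [integral_map hmeas.aemeasurable hf.aestronglyMeasurable]
    simp [Matrix.toLin'_apply]
  rw [h1, Real.map_matrix_volume_pi_eq_smul_volume_pi hA, integral_smul_measure,
    ENNReal.toReal_ofReal (by positivity), smul_eq_mul, abs_inv]

/-- Power-tempering a componentwise rescaled mixture distribution (CRMD) distorts the mixture
weights: if each component `a_j(x) = w_j |Σ_j|^{-1/2} g(s_j(x))` is raised to the power `β` and
renormalised as `W_{(j,β)} [g(s_j(x))]^β / ∫ [g(s_j(x))]^β dx`, then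
`W_{(j,β)} ∝ w_j^β |Σ_j|^{(1-β)/2}`. -/
theorem crmd_power_tempering_weights (d J : ℕ)
    (g : (Fin d → ℝ) → ℝ) (hgmeas : Measurable g) (hgnn : ∀ x, 0 ≤ g x)
    (hgint : ∫ x, g x = 1) (hgmax : ∀ x, g x ≤ g 0)
    (w : Fin J → ℝ) (hw : ∀ j, 0 < w j)
    (μ : Fin J → Fin d → ℝ) (S : Fin J → Matrix (Fin d) (Fin d) ℝ)
    (hS : ∀ j, (S j).PosDef)
    (s : Fin J → (Fin d → ℝ) → (Fin d → ℝ))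
    (hs : ∀ j x, s j x = ((((hS j).isHermitian.eigenvectorUnitary : Matrix (Fin d) (Fin d) ℝ) * Matrix.diagonal ((RCLike.ofReal : ℝ → ℝ) ∘ (√·) ∘ (hS j).isHermitian.eigenvalues) * (star (hS j).isHermitian.eigenvectorUnitary : Matrix (Fin d) (Fin d) ℝ))⁻¹).mulVec (x - μ j))
    (β : ℝ) (hβ : 0 < β)
    (W : Fin J → ℝ)
    (hW : ∀ j x,
      (w j * ((S j).det) ^ (-(1 : ℝ) / 2) * g (s j x)) ^ β =
        W j * (g (s j x)) ^ β / ∫ y, (g (s j y)) ^ β) :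
    ∃ c : ℝ, ∀ j, W j = c * (w j) ^ β * ((S j).det) ^ ((1 - β) / 2) := by
  classical
  -- g 0 > 0
  have hg0 : 0 < g 0 := by
    rcases lt_or_ge 0 (g 0) with h | h
    · exact h
    · exfalso
      have hz : g = fun _ => 0 :=
        funext fun x => le_antisymm ((hgmax x).trans h) (hgnn x)
      rw [hz] at hgint
      simp at hgint
  set c := ∫ u, g u ^ β with hc
  refine ⟨c, fun j => ?_⟩
  set T := (((hS j).isHermitian.eigenvectorUnitary : Matrix (Fin d) (Fin d) ℝ) * Matrix.diagonal ((RCLike.ofReal : ℝ → ℝ) ∘ (√·) ∘ (hS j).isHermitian.eigenvalues) * (star (hS j).isHermitian.eigenvectorUnitary : Matrix (Fin d) (Fin d) ℝ)) with hT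
  have hUU : (star (hS j).isHermitian.eigenvectorUnitary : Matrix (Fin d) (Fin d) ℝ) * ((hS j).isHermitian.eigenvectorUnitary : Matrix (Fin d) (Fin d) ℝ) = 1 :=
    Unitary.star_mul_self_of_mem (hS j).isHermitian.eigenvectorUnitary.2
  have hTT : T * T = S j := by
    conv_rhs => rw [(hS j).isHermitian.spectral_theorem, Unitary.conjStarAlgAut_apply]
    have e : T * T = ((hS j).isHermitian.eigenvectorUnitary : Matrix (Fin d) (Fin d) ℝ) * (Matrix.diagonal ((RCLike.ofReal : ℝ → ℝ) ∘ (√·) ∘ (hS j).isHermitian.eigenvalues) * ((star (hS j).isHermitian.eigenvectorUnitary : Matrix (Fin d) (Fin d) ℝ) * ((hS j).isHermitian.eigenvectorUnitary : Matrix (Fin d) (Fin d) ℝ)) * Matrix.diagonal ((RCLike.ofReal : ℝ → ℝ) ∘ (√·) ∘ (hS j).isHermitian.eigenvalues)) * (star (hS j).isHermitian.eigenvectorUnitary : Matrix (Fin d) (Fin d) ℝ) := by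
      simp only [hT, Matrix.mul_assoc]
    rw [e, hUU, Matrix.mul_one, Matrix.diagonal_mul_diagonal]
    congr 3
    funext i
    simp [Real.mul_self_sqrt ((hS j).eigenvalues_pos i).le]
  have hdetS : 0 < (S j).det := (hS j).det_pos
  have hdetT2 : T.det * T.det = (S j).det := by rw [← Matrix.det_mul, hTT]
  have hdetTnn : 0 ≤ T.det := by
    rw [hT, Matrix.det_mul, Matrix.det_mul, mul_comm, ← mul_assoc, ← Matrix.det_mul, hUU, Matrix.det_one, one_mul,
      Matrix.det_diagonal]
    exact Finset.prod_nonneg fun i _ => by simp [Real.sqrt_nonneg]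
  have hdetT : 0 < T.det := by
    rcases eq_or_lt_of_le hdetTnn with h | h
    · exfalso; rw [← h, mul_zero] at hdetT2; exact hdetS.ne (hdetT2)
    · exact h
  have hdetTr : T.det = (S j).det ^ ((1 : ℝ) / 2) := by
    rw [← Real.sqrt_eq_rpow, ← hdetT2, Real.sqrt_mul_self hdetTnn]
  have hdetA : (T⁻¹).det = T.det⁻¹ := by
    rw [Matrix.det_nonsing_inv, Ring.inverse_eq_inv']
  -- The normalising integral
  have hfmeas : Measurable fun u => g u ^ β := (Real.continuous_rpow_const hβ.le).measurable.comp hgmeas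
  have hInt : (∫ y, g (s j y) ^ β) = T.det * c := by
    have key := integral_comp_mulVec_sub (fun u => g u ^ β) hfmeas T⁻¹
      (by rw [hdetA]; exact inv_ne_zero hdetT.ne') (μ j)
    have hrw : ∀ y, g (s j y) ^ β = (fun u => g u ^ β) ((T⁻¹).mulVec (y - μ j)) := by
      intro y; rw [hs j y]
    simp_rw [hrw]
    rw [key, hdetA, abs_inv, inv_inv, abs_of_pos hdetT]
  -- Evaluate the hypothesis at the mode x = μ j
  have hsj0 : s j (μ j) = 0 := by rw [hs]; simp
  have h1 := hW j (μ j)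
  rw [hsj0, hInt] at h1
  have hg0b : (0 : ℝ) < g 0 ^ β := Real.rpow_pos_of_pos hg0 β
  have hDpos : (0 : ℝ) < (S j).det ^ (-(1 : ℝ) / 2) := Real.rpow_pos_of_pos hdetS _
  have hLpos : (0 : ℝ) < (w j * (S j).det ^ (-(1 : ℝ) / 2) * g 0) ^ β :=
    Real.rpow_pos_of_pos (mul_pos (mul_pos (hw j) hDpos) hg0) β
  have hTc : T.det * c ≠ 0 := by
    intro h
    rw [h, div_zero] at h1
    exact hLpos.ne' h1
  -- Solve for W j
  have hWj : W j = (w j * (S j).det ^ (-(1 : ℝ) / 2) * g 0) ^ β * (T.det * c) / g 0 ^ β := by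
    field_simp at h1 ⊢
    rw [eq_div_iff (right_ne_zero_of_mul hTc)] at h1
    linarith [h1]
  rw [hWj, Real.mul_rpow (mul_nonneg (hw j).le hDpos.le) (hgnn 0),
    Real.mul_rpow (hw j).le hDpos.le, ← Real.rpow_mul hdetS.le, hdetTr]
  have hexp : (S j).det ^ (-(1 : ℝ) / 2 * β) * (S j).det ^ ((1 : ℝ) / 2) =
      (S j).det ^ ((1 - β) / 2) := by
    rw [← Real.rpow_add hdetS]
    ring_nf
  rw [div_eq_iff hg0b.ne', ← hexp]
  ring
end

section
/- In the setting of the CRMD mixture γ(x) ∝ Σ_j a_j(x) with a_j(x) = w_j |Σ_j|^{-1/2} g(Σ_j^{-1/2}(x - μ_j)) and g having global maximum g(0), if one uses the weight-preserving tempering b_j(x,β) = a_j(x)^β a_j(μ_j)^{1-β}, then the normalised mixture weights are preserved: W_{(j,β)} ∝ w_j, independent of β. -/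
open MeasureTheory Real

/-- Change of variables for an invertible matrix and a translation, with no
integrability assumptions. -/
lemma integral_comp_mulVec_sub_s6 {d : ℕ} (T : Matrix (Fin d) (Fin d) ℝ) (hT : T.det ≠ 0)
    (f : (Fin d → ℝ) → ℝ) (hf : Measurable f) (v : Fin d → ℝ) :
    ∫ y, f (T.mulVec (y - v)) = |T.det|⁻¹ * ∫ y, f y := by
  have h1 : ∫ y, f (T.mulVec (y - v)) = ∫ y, f (T.mulVec y) :=
    integral_sub_right_eq_self (fun y => f (T.mulVec y)) v
  rw [h1]
  have hlin : LinearMap.det (Matrix.toLin' T) ≠ 0 := by rwa [LinearMap.det_toLin']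
  have hmap := Real.map_linearMap_volume_pi_eq_smul_volume_pi hlin
  have hcont : Continuous (Matrix.toLin' T) := LinearMap.continuous_of_finiteDimensional _
  have h2 : ∫ y, f (T.mulVec y) = ∫ y, f ((Matrix.toLin' T) y) := by
    simp [Matrix.toLin'_apply]
  rw [h2, ← integral_map hcont.aemeasurable hf.aestronglyMeasurable, hmap,
    integral_smul_measure, LinearMap.det_toLin',
    ENNReal.toReal_ofReal (abs_nonneg _), abs_inv, smul_eq_mul]

/-- Weight-preserving tempering of a CRMD: if each component `a_j(x) = w_j |Σ_j|^{-1/2} g(s_j(x))`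
is tempered as `b_j(x,β) = a_j(x)^β a_j(μ_j)^{1-β}` and renormalised as
`W_{(j,β)} [g(s_j(x))]^β / ∫ [g(s_j(x))]^β dx`, then the mixture weights are preserved:
`W_{(j,β)} ∝ w_j`, independently of `β`. -/
theorem crmd_weight_preserving_tempering (d J : ℕ)
    (g : (Fin d → ℝ) → ℝ) (hgmeas : Measurable g) (hgnn : ∀ x, 0 ≤ g x)
    (hgint : ∫ x, g x = 1) (hgmax : ∀ x, g x ≤ g 0)
    (w : Fin J → ℝ) (hw : ∀ j, 0 < w j)
    (μ : Fin J → Fin d → ℝ) (S : Fin J → Matrix (Fin d) (Fin d) ℝ)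
    (hS : ∀ j, (S j).PosDef)
    (s : Fin J → (Fin d → ℝ) → (Fin d → ℝ))
    (hs : ∀ j x, s j x = ((((hS j).posSemidef.1.eigenvectorUnitary : Matrix (Fin d) (Fin d) ℝ) * Matrix.diagonal ((RCLike.ofReal : ℝ → ℝ) ∘ Real.sqrt ∘ (hS j).posSemidef.1.eigenvalues) * (star (hS j).posSemidef.1.eigenvectorUnitary : Matrix (Fin d) (Fin d) ℝ))⁻¹).mulVec (x - μ j))
    (a : Fin J → (Fin d → ℝ) → ℝ)
    (ha : ∀ j x, a j x = w j * ((S j).det) ^ (-(1 : ℝ) / 2) * g (s j x))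
    (β : ℝ) (hβ : 0 < β)
    (W : Fin J → ℝ)
    (hW : ∀ j x,
      (a j x) ^ β * (a j (μ j)) ^ (1 - β) =
        W j * (g (s j x)) ^ β / ∫ y, (g (s j y)) ^ β) :
    ∃ c : ℝ, ∀ j, W j = c * w j := by
  -- g 0 > 0
  have hg0 : 0 < g 0 := by
    rcases lt_or_eq_of_le (hgnn 0) with h | h
    · exact h
    · exfalso
      have hzero : ∀ x, g x = 0 := fun x => le_antisymm (by rw [h]; exact hgmax x) (hgnn x)
      have : (∫ x, g x) = 0 := by simp [hzero]
      rw [hgint] at this; norm_num at this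
  set K := ∫ y, g y ^ β with hK
  refine ⟨g 0 ^ (1 - β) * K, fun j => ?_⟩
  set D := (S j).det with hD
  have hDpos : 0 < D := (hS j).det_pos
  set R := (((hS j).posSemidef.1.eigenvectorUnitary : Matrix (Fin d) (Fin d) ℝ) * Matrix.diagonal ((RCLike.ofReal : ℝ → ℝ) ∘ Real.sqrt ∘ (hS j).posSemidef.1.eigenvalues) * (star (hS j).posSemidef.1.eigenvectorUnitary : Matrix (Fin d) (Fin d) ℝ)) with hR
  have hRdet : R.det * R.det = D := by
    have hRR : R * R = S j := by
      have hU := Unitary.coe_star_mul_self (hS j).posSemidef.1.eigenvectorUnitary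
      have hdiag : Matrix.diagonal ((RCLike.ofReal : ℝ → ℝ) ∘ Real.sqrt ∘ (hS j).posSemidef.1.eigenvalues) * Matrix.diagonal ((RCLike.ofReal : ℝ → ℝ) ∘ Real.sqrt ∘ (hS j).posSemidef.1.eigenvalues) = Matrix.diagonal ((RCLike.ofReal : ℝ → ℝ) ∘ (hS j).posSemidef.1.eigenvalues) := by
        rw [Matrix.diagonal_mul_diagonal]; congr 1; funext i
        simp [Real.mul_self_sqrt ((hS j).posSemidef.eigenvalues_nonneg i)]
      conv_rhs => rw [(hS j).posSemidef.1.spectral_theorem]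
      rw [hR]; simp only [Matrix.mul_assoc]
      rw [← Matrix.mul_assoc (star _ : Matrix (Fin d) (Fin d) ℝ) _, hU, Matrix.one_mul, ← Matrix.mul_assoc _ _ (star _ : Matrix (Fin d) (Fin d) ℝ), hdiag]
      simp [Matrix.mul_assoc]
    rw [← Matrix.det_mul, hRR]
  have hRne : R.det ≠ 0 := by
    intro h; rw [h, mul_zero] at hRdet; exact hDpos.ne' hRdet.symm
  have hfmeas : Measurable fun v => g v ^ β := by fun_prop
  -- the integral of the tempered component
  have hTdet : (R⁻¹).det ≠ 0 := by
    rw [Matrix.det_nonsing_inv, Ring.inverse_eq_inv]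
    exact inv_ne_zero hRne
  have hI : (∫ y, (g (s j y)) ^ β) = |R.det| * K := by
    have : ∀ y, (g (s j y)) ^ β = (fun v => g v ^ β) ((R⁻¹).mulVec (y - μ j)) := by
      intro y; rw [hs, hR]
    calc (∫ y, (g (s j y)) ^ β)
        = ∫ y, (fun v => g v ^ β) ((R⁻¹).mulVec (y - μ j)) := by
          exact integral_congr_ae (Filter.Eventually.of_forall this)
      _ = |(R⁻¹).det|⁻¹ * K := integral_comp_mulVec_sub_s6 _ hTdet _ hfmeas _
      _ = |R.det| * K := by
          rw [Matrix.det_nonsing_inv, Ring.inverse_eq_inv, abs_inv, inv_inv]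
  have habs : |R.det| = Real.sqrt D := by
    rw [← hRdet, Real.sqrt_mul_self_eq_abs]
  -- evaluate the hypothesis at x = μ j
  have hs0 : s j (μ j) = 0 := by rw [hs]; simp
  have h1 := hW j (μ j)
  rw [hs0] at h1
  have hapos : 0 < a j (μ j) := by
    rw [ha, hs0]
    exact mul_pos (mul_pos (hw j) (Real.rpow_pos_of_pos hDpos _)) hg0
  have hLHS : (a j (μ j)) ^ β * (a j (μ j)) ^ (1 - β) = a j (μ j) := by
    rw [← Real.rpow_add hapos]; simp
  rw [hLHS, hI] at h1
  have hg0p : (0:ℝ) < g 0 ^ β := Real.rpow_pos_of_pos hg0 _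
  have hKne : K ≠ 0 := by
    intro h
    rw [h, mul_zero, div_zero] at h1
    exact hapos.ne' h1
  have hIne : |R.det| * K ≠ 0 := mul_ne_zero (abs_ne_zero.mpr hRne) hKne
  rw [eq_div_iff hIne] at h1
  -- h1 : a j (μ j) * (|R.det| * K) = W j * g 0 ^ β
  have hWj : W j = a j (μ j) * (|R.det| * K) / g 0 ^ β := by
    rw [eq_div_iff hg0p.ne']
    linarith
  rw [hWj, ha, hs0, habs]
  have e1 : D ^ (-(1:ℝ)/2) * Real.sqrt D = 1 := by
    rw [Real.sqrt_eq_rpow, ← Real.rpow_add hDpos]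
    norm_num
  have e2 : g 0 ^ ((1:ℝ) - β) = g 0 / g 0 ^ β := by
    rw [Real.rpow_sub hg0, Real.rpow_one]
  calc (w j * D ^ (-(1:ℝ)/2) * g 0) * (Real.sqrt D * K) / g 0 ^ β
      = (D ^ (-(1:ℝ)/2) * Real.sqrt D) * (g 0 / g 0 ^ β * K * w j) := by ring
    _ = g 0 ^ ((1:ℝ) - β) * K * w j := by rw [e1, ← e2, one_mul]
end
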